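/- For k ∈ ℕ with k ≥ 1, define the shifted Legendre polynomial R_k(x) = ∑_{j=0}^{k} C(k,j)² (x−1)^{k−j} x^j and the shifted Jacobi polynomial R_{k−1}^{(1,1)}(x) = ∑_{j=0}^{k−1} C(k,j) C(k,k−1−j) (x−1)^{k−1−j} x^j. Then for all x ∈ [0,1], ∫₀^x R_k(t) dt = −(1/k) · x(1−x) · R_{k−1}^{(1,1)}(x). -/

import Mathlib

open Finset

lemma nat1 (k j : ℕ) (hj : j < k) :
    k.choose j * k.choose (k - 1 - j) * (j + 1) = (k - j) * k.choose j ^ 2 := by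
  have hsym : k.choose (k - 1 - j) = k.choose (j + 1) := by
    rw [show k - 1 - j = k - (j + 1) by omega, Nat.choose_symm (by omega)]
  have h := Nat.choose_succ_right_eq k j
  rw [hsym, mul_assoc, h, pow_two]; ring

lemma nat2 (k j : ℕ) (hj : j < k) :
    k.choose j * k.choose (k - 1 - j) * (k - j) = (j + 1) * k.choose (j + 1) ^ 2 := by
  have hsym : k.choose (k - 1 - j) = k.choose (j + 1) := by
    rw [show k - 1 - j = k - (j + 1) by omega, Nat.choose_symm (by omega)]
  have h := Nat.choose_succ_right_eq k j
  rw [hsym, mul_right_comm, ← h, pow_two]; ring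

lemma key (k : ℕ) (hk : 1 ≤ k) (t : ℝ) :
    ∑ j ∈ range k, ((k.choose j * k.choose (k - 1 - j) : ℕ) : ℝ) / k *
        ((j + 1) * t ^ j * (t - 1) ^ (k - j) +
          ((k - j : ℕ) : ℝ) * t ^ (j + 1) * (t - 1) ^ (k - 1 - j))
      = ∑ j ∈ range (k + 1), (k.choose j : ℝ) ^ 2 * (t - 1) ^ (k - j) * t ^ j := by
  have hk0 : (k : ℝ) ≠ 0 := by positivity
  have hR : ∀ j ∈ range (k + 1),
      (k.choose j : ℝ) ^ 2 * (t - 1) ^ (k - j) * t ^ j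
        = ((k - j : ℕ) : ℝ) / k * ((k.choose j : ℝ) ^ 2 * (t - 1) ^ (k - j) * t ^ j)
          + ((j : ℕ) : ℝ) / k * ((k.choose j : ℝ) ^ 2 * (t - 1) ^ (k - j) * t ^ j) := by
    intro j hj
    have hjk : j ≤ k := by simpa using Nat.lt_succ_iff.mp (mem_range.mp hj)
    have hc : ((k - j : ℕ) : ℝ) + j = k := by
      have h' : (k - j) + j = k := by omega
      exact_mod_cast congrArg (Nat.cast : ℕ → ℝ) h'
    have hone : ((k - j : ℕ) : ℝ) / k + (j : ℝ) / k = 1 := by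
      rw [← add_div, hc, div_self hk0]
    nth_rewrite 1 [← one_mul ((k.choose j : ℝ) ^ 2 * (t - 1) ^ (k - j) * t ^ j)]
    rw [← hone]; ring
  rw [Finset.sum_congr rfl hR, Finset.sum_add_distrib]
  have h1 : ∑ j ∈ range (k + 1),
      ((k - j : ℕ) : ℝ) / k * ((k.choose j : ℝ) ^ 2 * (t - 1) ^ (k - j) * t ^ j)
      = ∑ j ∈ range k,
        ((k - j : ℕ) : ℝ) / k * ((k.choose j : ℝ) ^ 2 * (t - 1) ^ (k - j) * t ^ j) := by
    rw [Finset.sum_range_succ]; simp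
  have h2 : ∑ j ∈ range (k + 1),
      ((j : ℕ) : ℝ) / k * ((k.choose j : ℝ) ^ 2 * (t - 1) ^ (k - j) * t ^ j)
      = ∑ j ∈ range k,
        (((j + 1 : ℕ)) : ℝ) / k * ((k.choose (j + 1) : ℝ) ^ 2 * (t - 1) ^ (k - (j + 1)) * t ^ (j + 1)) := by
    rw [Finset.sum_range_succ']; simp
  rw [h1, h2, ← Finset.sum_add_distrib]
  apply Finset.sum_congr rfl
  intro j hj
  have hjk : j < k := mem_range.mp hj
  have e1 := nat1 k j hjk
  have e2 := nat2 k j hjk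
  have e1' : ((k.choose j * k.choose (k - 1 - j) : ℕ) : ℝ) * (j + 1)
      = ((k - j : ℕ) : ℝ) * (k.choose j : ℝ) ^ 2 := by exact_mod_cast e1
  have e2' : ((k.choose j * k.choose (k - 1 - j) : ℕ) : ℝ) * ((k - j : ℕ) : ℝ)
      = ((j + 1 : ℕ) : ℝ) * (k.choose (j + 1) : ℝ) ^ 2 := by exact_mod_cast e2
  have hkj : k - (j + 1) = k - 1 - j := by omega
  rw [hkj]
  field_simp
  push_cast at e1' e2' ⊢
  linear_combination (t ^ j * (t - 1) ^ (k - j)) * e1' + (t ^ (j + 1) * (t - 1) ^ (k - 1 - j)) * e2'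

theorem shiftedLegendre_integral (k : ℕ) (hk : 1 ≤ k) (x : ℝ)
    (hx : x ∈ Set.Icc (0:ℝ) 1) :
    ∫ t in (0:ℝ)..x,
        (∑ j ∈ Finset.range (k + 1), (k.choose j : ℝ) ^ 2 * (t - 1) ^ (k - j) * t ^ j) =
      -(1 / (k : ℝ)) * (x * (1 - x)) *
        ∑ j ∈ Finset.range k,
          (k.choose j : ℝ) * (k.choose (k - 1 - j) : ℝ) * (x - 1) ^ (k - 1 - j) * x ^ j := by
  set F : ℝ → ℝ := fun y => -(1 / (k : ℝ)) * (y * (1 - y)) *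
      ∑ j ∈ range k, (k.choose j : ℝ) * (k.choose (k - 1 - j) : ℝ) * (y - 1) ^ (k - 1 - j) * y ^ j
    with hFdef
  have hFG : ∀ y : ℝ, F y = ∑ j ∈ range k,
      ((k.choose j * k.choose (k - 1 - j) : ℕ) : ℝ) / k * (y ^ (j + 1) * (y - 1) ^ (k - j)) := by
    intro y
    rw [hFdef]
    simp only [Finset.mul_sum]
    apply Finset.sum_congr rfl
    intro j hj
    have hjk : j < k := mem_range.mp hj
    rw [show k - j = (k - 1 - j) + 1 by omega, pow_succ]
    push_cast
    ring
  have hF : ∀ y : ℝ, HasDerivAt F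
      (∑ j ∈ range (k + 1), (k.choose j : ℝ) ^ 2 * (y - 1) ^ (k - j) * y ^ j) y := by
    intro y
    have hG : HasDerivAt (fun y : ℝ => ∑ j ∈ range k,
        ((k.choose j * k.choose (k - 1 - j) : ℕ) : ℝ) / k * (y ^ (j + 1) * (y - 1) ^ (k - j)))
        (∑ j ∈ range k, ((k.choose j * k.choose (k - 1 - j) : ℕ) : ℝ) / k *
          ((j + 1) * y ^ j * (y - 1) ^ (k - j) +
            ((k - j : ℕ) : ℝ) * y ^ (j + 1) * (y - 1) ^ (k - 1 - j))) y := by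
      apply HasDerivAt.fun_sum
      intro j hj
      have hjk : j < k := mem_range.mp hj
      have hp : HasDerivAt (fun y : ℝ => y ^ (j + 1)) ((j + 1) * y ^ j) y := by
        simpa using hasDerivAt_pow (j + 1) y
      have hq : HasDerivAt (fun y : ℝ => (y - 1) ^ (k - j))
          (((k - j : ℕ) : ℝ) * (y - 1) ^ (k - 1 - j)) y := by
        have := ((hasDerivAt_id y).sub_const 1).fun_pow (k - j)
        simpa [show k - j - 1 = k - 1 - j by omega] using this
      have := (hp.fun_mul hq).const_mul
        (((k.choose j * k.choose (k - 1 - j) : ℕ) : ℝ) / k)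
      convert this using 1
      case e'_4 => rfl
      case e'_9 => ring
    have hfun : F = fun y : ℝ => ∑ j ∈ range k,
        ((k.choose j * k.choose (k - 1 - j) : ℕ) : ℝ) / k * (y ^ (j + 1) * (y - 1) ^ (k - j)) :=
      funext hFG
    rw [hfun, ← key k hk y]
    exact hG
  have hint : IntervalIntegrable
      (fun t : ℝ => ∑ j ∈ Finset.range (k + 1),
        (k.choose j : ℝ) ^ 2 * (t - 1) ^ (k - j) * t ^ j) MeasureTheory.volume 0 x := by
    apply Continuous.intervalIntegrable
    apply continuous_finset_sum
    intro j _
    fun_prop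
  rw [intervalIntegral.integral_eq_sub_of_hasDerivAt (fun t _ => hF t) hint]
  have hF0 : F 0 = 0 := by simp [hFdef]
  rw [hF0, sub_zero]
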